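/- arXiv:1006.3909 — 4 statements merged into one kernel-verified Lean document; each statement's English description precedes it below -/
import Mathlib

section
/- The 5-dimensional twisted cube TQ_5 contains two edge-disjoint Hamiltonian paths P and Q such that P starts at 00000 and ends at 11000, and Q starts at 00100 and ends at 01100. -/
/-- Parity function `P i b = b_i ⊕ b_{i-1} ⊕ ... ⊕ b_0`. -/
def parityFn {n : ℕ} (b : Fin n → Bool) (i : ℕ) : Bool :=
  decide ((((List.range (i+1)).filter fun j => if h : j < n then b ⟨j, h⟩ else false).length) % 2 = 1)

/-- The low-order `2k+1` bits of a binary string of length `2(k+1)+1`. -/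
def lowBits {k : ℕ} (b : Fin (2*(k+1)+1) → Bool) : Fin (2*k+1) → Bool :=
  fun i => b (Fin.castLE (by omega) i)

/-- The cross-edge relation in the twisted cube `TQ_{2(k+1)+1}`:
`b'` is a cross-edge neighbor of `b`. -/
def crossRel (k : ℕ) (b b' : Fin (2*(k+1)+1) → Bool) : Prop :=
  lowBits b' = lowBits b ∧
  ((b' ⟨2*k+2, by omega⟩ = !b ⟨2*k+2, by omega⟩ ∧ b' ⟨2*k+1, by omega⟩ = b ⟨2*k+1, by omega⟩) ∨
   (parityFn b (2*k) = false ∧ b' ⟨2*k+2, by omega⟩ = !b ⟨2*k+2, by omega⟩ ∧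
      b' ⟨2*k+1, by omega⟩ = !b ⟨2*k+1, by omega⟩) ∨
   (parityFn b (2*k) = true ∧ b' ⟨2*k+2, by omega⟩ = b ⟨2*k+2, by omega⟩ ∧
      b' ⟨2*k+1, by omega⟩ = !b ⟨2*k+1, by omega⟩))

/-- The twisted cube `TQ_n` for odd `n = 2k+1`, on vertex set the binary
strings of length `n` (bit `i` of `b` is `b i`). -/
def TwistedCube : (k : ℕ) → SimpleGraph (Fin (2*k+1) → Bool)
  | 0 => ⊤
  | (k+1) =>
    { Adj := fun b b' => b ≠ b' ∧
        ((b ⟨2*k+2, by omega⟩ = b' ⟨2*k+2, by omega⟩ ∧ b ⟨2*k+1, by omega⟩ = b' ⟨2*k+1, by omega⟩ ∧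
          (TwistedCube k).Adj (lowBits b) (lowBits b')) ∨
         crossRel k b b' ∨ crossRel k b' b)
      symm := ⟨by
        rintro b b' ⟨hne, h⟩
        refine ⟨hne.symm, ?_⟩
        rcases h with ⟨h1, h2, h3⟩ | h | h
        · exact Or.inl ⟨h1.symm, h2.symm, (TwistedCube k).adj_symm h3⟩
        · exact Or.inr (Or.inr h)
        · exact Or.inr (Or.inl h)⟩
      loopless := ⟨fun b h => h.1 rfl⟩ }

open SimpleGraph

instance crossRelDec (k : ℕ) (b b' : Fin (2*(k+1)+1) → Bool) : Decidable (crossRel k b b') :=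
  decidable_of_iff (lowBits b' = lowBits b ∧
    ((b' ⟨2*k+2, Nat.lt_succ_self _⟩ = !b ⟨2*k+2, Nat.lt_succ_self _⟩ ∧
        b' ⟨2*k+1, Nat.lt_succ_of_lt (Nat.lt_succ_self _)⟩ =
          b ⟨2*k+1, Nat.lt_succ_of_lt (Nat.lt_succ_self _)⟩) ∨
     (parityFn b (2*k) = false ∧ b' ⟨2*k+2, Nat.lt_succ_self _⟩ = !b ⟨2*k+2, Nat.lt_succ_self _⟩ ∧
        b' ⟨2*k+1, Nat.lt_succ_of_lt (Nat.lt_succ_self _)⟩ =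
          !b ⟨2*k+1, Nat.lt_succ_of_lt (Nat.lt_succ_self _)⟩) ∨
     (parityFn b (2*k) = true ∧ b' ⟨2*k+2, Nat.lt_succ_self _⟩ = b ⟨2*k+2, Nat.lt_succ_self _⟩ ∧
        b' ⟨2*k+1, Nat.lt_succ_of_lt (Nat.lt_succ_self _)⟩ =
          !b ⟨2*k+1, Nat.lt_succ_of_lt (Nat.lt_succ_self _)⟩))) Iff.rfl

instance tqDec : (k : ℕ) → DecidableRel (TwistedCube k).Adj
  | 0 => fun a b => decidable_of_iff (a ≠ b) Iff.rfl
  | (k+1) => fun a b =>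
      haveI : ∀ x y, Decidable ((TwistedCube k).Adj x y) := tqDec k
      decidable_of_iff (a ≠ b ∧
        ((a ⟨2*k+2, Nat.lt_succ_self _⟩ = b ⟨2*k+2, Nat.lt_succ_self _⟩ ∧
          a ⟨2*k+1, Nat.lt_succ_of_lt (Nat.lt_succ_self _)⟩ =
            b ⟨2*k+1, Nat.lt_succ_of_lt (Nat.lt_succ_self _)⟩ ∧
          (TwistedCube k).Adj (lowBits a) (lowBits b)) ∨
         crossRel k a b ∨ crossRel k b a)) Iff.rfl

set_option maxRecDepth 10000
set_option maxHeartbeats 2000000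

def walkP : (TwistedCube 2).Walk ((fun _ => false : Fin 5 → Bool)) ((fun i : Fin 5 => decide ((i : ℕ) = 4 ∨ (i : ℕ) = 3))) :=
  Walk.cons (v := ![false, false, true, false, false]) (by decide) (Walk.cons (v := ![false, false, true, false, true]) (by decide) (Walk.cons (v := ![false, false, true, true, true]) (by decide) (Walk.cons (v := ![false, false, true, true, false]) (by decide) (Walk.cons (v := ![false, true, false, true, false]) (by decide) (Walk.cons (v := ![false, true, false, true, true]) (by decide) (Walk.cons (v := ![false, true, false, false, true]) (by decide) (Walk.cons (v := ![false, true, true, false, true]) (by decide) (Walk.cons (v := ![false, false, false, false, true]) (by decide) (Walk.cons (v := ![false, false, false, true, false]) (by decide) (Walk.cons (v := ![false, true, true, true, false]) (by decide) (Walk.cons (v := ![false, true, true, true, true]) (by decide) (Walk.cons (v := ![false, true, true, false, false]) (by decide) (Walk.cons (v := ![false, true, false, false, false]) (by decide) (Walk.cons (v := ![true, true, false, false, false]) (by decide) (Walk.cons (v := ![true, false, false, false, false]) (by decide) (Walk.cons (v := ![true, false, false, false, true]) (by decide) (Walk.cons (v := ![true, false, true, false, true]) (by decide) (Walk.cons (v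 := ![true, false, true, false, false]) (by decide) (Walk.cons (v := ![true, false, true, true, true]) (by decide) (Walk.cons (v := ![true, true, true, true, true]) (by decide) (Walk.cons (v := ![true, true, false, true, true]) (by decide) (Walk.cons (v := ![true, true, false, true, false]) (by decide) (Walk.cons (v := ![true, true, false, false, true]) (by decide) (Walk.cons (v := ![true, true, true, false, true]) (by decide) (Walk.cons (v := ![true, true, true, false, false]) (by decide) (Walk.cons (v := ![true, true, true, true, false]) (by decide) (Walk.cons (v := ![true, false, true, true, false]) (by decide) (Walk.cons (v := ![true, false, false, true, false]) (by decide) (Walk.cons (v := ![true, false, false, true, true]) (by decide) (Walk.cons (by decide) Walk.nil))))))))))))))))))))))))))))))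

def walkQ : (TwistedCube 2).Walk ((fun i : Fin 5 => decide ((i : ℕ) = 2))) ((fun i : Fin 5 => decide ((i : ℕ) = 3 ∨ (i : ℕ) = 2))) :=
  Walk.cons (v := ![true, false, true, false, false]) (by decide) (Walk.cons (v := ![true, true, true, false, false]) (by decide) (Walk.cons (v := ![false, true, true, false, false]) (by decide) (Walk.cons (v := ![false, true, true, false, true]) (by decide) (Walk.cons (v := ![false, true, true, true, false]) (by decide) (Walk.cons (v := ![true, true, true, true, false]) (by decide) (Walk.cons (v := ![true, true, false, true, false]) (by decide) (Walk.cons (v := ![false, true, false, true, false]) (by decide) (Walk.cons (v := ![false, true, false, false, false]) (by decide) (Walk.cons (v := ![false, true, false, false, true]) (by decide) (Walk.cons (v := ![false, false, true, false, true]) (by decide) (Walk.cons (v := ![false, false, false, false, true]) (by decide) (Walk.cons (v := ![false, false, false, false, false]) (by decide) (Walk.cons (v := ![true, false, false, false, false]) (by decide) (Walk.cons (v := ![true, false, false, true, false]) (by decide) (Walk.cons (v := ![false, false, false, true, false]) (by decide) (Walk.cons (v := ![false, false, false, true, true]) (by decide) (Walk.cons (v := ![false, false, true, true, true]) (by decide)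 (Walk.cons (v := ![true, false, true, true, true]) (by decide) (Walk.cons (v := ![true, false, false, true, true]) (by decide) (Walk.cons (v := ![true, false, false, false, true]) (by decide) (Walk.cons (v := ![true, true, false, false, true]) (by decide) (Walk.cons (v := ![true, true, false, false, false]) (by decide) (Walk.cons (v := ![true, true, false, true, true]) (by decide) (Walk.cons (v := ![false, true, false, true, true]) (by decide) (Walk.cons (v := ![false, true, true, true, true]) (by decide) (Walk.cons (v := ![true, true, true, true, true]) (by decide) (Walk.cons (v := ![true, true, true, false, true]) (by decide) (Walk.cons (v := ![true, false, true, false, true]) (by decide) (Walk.cons (v := ![true, false, true, true, false]) (by decide) (Walk.cons (by decide) Walk.nil))))))))))))))))))))))))))))))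

/-- `TQ_5` contains two edge-disjoint Hamiltonian paths `P` and `Q` such
that `P` starts at `00000` and ends at `11000`, and `Q` starts at `00100` and ends
at `01100`. -/
theorem tq5_two_edge_disjoint_hamiltonian_paths :
    ∃ (P : (TwistedCube 2).Walk (fun _ => false)
        (fun i => decide ((i : ℕ) = 4 ∨ (i : ℕ) = 3)))
      (Q : (TwistedCube 2).Walk (fun i => decide ((i : ℕ) = 2))
        (fun i => decide ((i : ℕ) = 3 ∨ (i : ℕ) = 2))),
      P.IsPath ∧ P.IsHamiltonian ∧ Q.IsPath ∧ Q.IsHamiltonian ∧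
      ∀ e, e ∈ P.edges → e ∉ Q.edges := by
  refine ⟨walkP, walkQ, ⟨⟨by decide⟩, by decide⟩, ?_, ⟨⟨by decide⟩, by decide⟩, ?_, ?_⟩
  · show ∀ v, walkP.support.count v = 1
    decide
  · show ∀ v, walkQ.support.count v = 1
    decide
  · decide
end

section
/- For every odd integer n ≥ 5, the twisted cube TQ_n contains two edge-disjoint Hamiltonian paths P and Q with start(P) = 00(0)^{n-5}000, end(P) = 11(0)^{n-5}000, start(Q) = 00(0)^{n-5}100, and end(Q) = 01(0)^{n-5}100. -/
-- Decidability
instance crossRel.dec (k : ℕ) (b b' : Fin (2*(k+1)+1) → Bool) : Decidable (crossRel k b b') :=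
  inferInstanceAs (Decidable (lowBits b' = lowBits b ∧
  ((b' ⟨2*k+2, by omega⟩ = !b ⟨2*k+2, by omega⟩ ∧ b' ⟨2*k+1, by omega⟩ = b ⟨2*k+1, by omega⟩) ∨
   (parityFn b (2*k) = false ∧ b' ⟨2*k+2, by omega⟩ = !b ⟨2*k+2, by omega⟩ ∧
      b' ⟨2*k+1, by omega⟩ = !b ⟨2*k+1, by omega⟩) ∨
   (parityFn b (2*k) = true ∧ b' ⟨2*k+2, by omega⟩ = b ⟨2*k+2, by omega⟩ ∧
      b' ⟨2*k+1, by omega⟩ = !b ⟨2*k+1, by omega⟩))))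

instance TwistedCube.dec : (k : ℕ) → DecidableRel (TwistedCube k).Adj
  | 0 => fun a b => decidable_of_iff (a ≠ b) (by simp [TwistedCube])
  | (k+1) => fun a b =>
    haveI : DecidableRel (TwistedCube k).Adj := TwistedCube.dec k
    haveI : Decidable ((TwistedCube k).Adj (lowBits a) (lowBits b)) := this _ _
    inferInstanceAs (Decidable (a ≠ b ∧
        ((a ⟨2*k+2, by omega⟩ = b ⟨2*k+2, by omega⟩ ∧ a ⟨2*k+1, by omega⟩ = b ⟨2*k+1, by omega⟩ ∧
          (TwistedCube k).Adj (lowBits a) (lowBits b)) ∨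
         crossRel k a b ∨ crossRel k b a)))

-- computable chain predicate
def ChainP {V : Type*} (R : V → V → Prop) : List V → Prop
  | a :: b :: l => R a b ∧ ChainP R (b :: l)
  | _ => True

instance ChainP.dec {V : Type*} (R : V → V → Prop) [DecidableRel R] :
    ∀ l : List V, Decidable (ChainP R l)
  | [] => isTrue trivial
  | [_] => isTrue trivial
  | a :: b :: l =>
    haveI := ChainP.dec R (b :: l)
    inferInstanceAs (Decidable (R a b ∧ ChainP R (b :: l)))

lemma chainP_chain' {V : Type*} {R : V → V → Prop} :
    ∀ {l : List V}, ChainP R l → l.Chain' R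
  | [], _ => List.isChain_nil
  | [a], _ => List.isChain_singleton a
  | _ :: b :: l, h => List.isChain_cons_cons.mpr ⟨h.1, chainP_chain' (l := b :: l) h.2⟩

-- edge list of a path given as vertex list
def eL {V : Type*} : List V → List (Sym2 V)
  | a :: b :: l => s(a, b) :: eL (b :: l)
  | _ => []

@[simp] lemma eL_nil {V : Type*} : eL ([] : List V) = [] := rfl
@[simp] lemma eL_single {V : Type*} (a : V) : eL [a] = [] := rfl
@[simp] lemma eL_cons_cons {V : Type*} (a b : V) (l : List V) :
    eL (a :: b :: l) = s(a, b) :: eL (b :: l) := rfl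

lemma eL_append {V : Type*} : ∀ (A B : List V) (x y : V),
    A.getLast? = some x → B.head? = some y → eL (A ++ B) = eL A ++ s(x, y) :: eL B
  | [], B, x, y, hx, hy => by simp at hx
  | [a], b :: B, x, y, hx, hy => by
      simp_all only [List.getLast?_singleton, Option.some.injEq, List.head?_cons]
      subst hx hy; simp
  | a₁ :: a₂ :: A, B, x, y, hx, hy => by
      rw [List.getLast?_cons_cons] at hx
      have := eL_append (a₂ :: A) B x y hx hy
      simp only [List.cons_append, eL_cons_cons] at this ⊢
      rw [this]

lemma eL_map {V W : Type*} (f : V → W) : ∀ (l : List V), eL (l.map f) = (eL l).map (Sym2.map f)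
  | [] => rfl
  | [a] => rfl
  | a :: b :: l => by
      have := eL_map f (b :: l)
      simp only [List.map_cons] at this ⊢
      simp [eL_cons_cons, this, Sym2.map_pair_eq]

lemma eL_reverse {V : Type*} : ∀ (l : List V), eL l.reverse = (eL l).reverse
  | [] => rfl
  | [a] => rfl
  | a :: b :: l => by
      have h1 : (b :: l).reverse.getLast? = some b := by
        rw [List.getLast?_reverse]; rfl
      calc eL ((a :: b :: l).reverse) = eL ((b :: l).reverse ++ [a]) := by simp
        _ = eL ((b :: l).reverse) ++ s(b, a) :: eL [a] := eL_append _ _ b a h1 rfl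
        _ = (eL (b :: l)).reverse ++ [s(a, b)] := by
              rw [eL_reverse (b :: l)]; simp [Sym2.eq_swap]
        _ = (eL (a :: b :: l)).reverse := by simp

-- walk from a chain list
lemma exists_walk {V : Type*} {G : SimpleGraph V} :
    ∀ (l : List V) {x y : V}, l.Chain' G.Adj → l.head? = some x → l.getLast? = some y →
      ∃ w : G.Walk x y, w.support = l ∧ w.edges = eL l
  | [], x, y, _, hx, _ => by simp at hx
  | [a], x, y, _, hx, hy => by
      simp only [List.head?_cons, Option.some.injEq, List.getLast?_singleton] at hx hy
      subst hx hy
      exact ⟨SimpleGraph.Walk.nil, rfl, rfl⟩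
  | a :: b :: l, x, y, hc, hx, hy => by
      simp only [List.head?_cons, Option.some.injEq] at hx
      subst hx
      rw [List.getLast?_cons_cons] at hy
      change List.IsChain _ _ at hc
      rw [List.isChain_cons] at hc
      obtain ⟨w, hs, he⟩ := exists_walk (b :: l) hc.2 rfl hy
      exact ⟨SimpleGraph.Walk.cons (hc.1 b rfl) w, by simp [hs], by simp [he]⟩
-- special vertices
def zeroV (k : ℕ) : Fin (2*k+1) → Bool := fun _ => false
def eV (k : ℕ) : Fin (2*k+1) → Bool := fun i => decide ((i : ℕ) = 2*k ∨ (i : ℕ) = 2*k-1)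
def sV (k : ℕ) : Fin (2*k+1) → Bool := fun i => decide ((i : ℕ) = 2)
def tV (k : ℕ) : Fin (2*k+1) → Bool := fun i => decide ((i : ℕ) = 2*k-1 ∨ (i : ℕ) = 2)

-- the lift
def ext (k : ℕ) (i j : Bool) (b : Fin (2*k+1) → Bool) : Fin (2*(k+1)+1) → Bool :=
  fun m => if h : (m : ℕ) < 2*k+1 then b ⟨m, h⟩ else if (m : ℕ) = 2*k+1 then j else i

lemma lowBits_ext (k : ℕ) (i j : Bool) (b : Fin (2*k+1) → Bool) : lowBits (ext k i j b) = b := by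
  funext m
  simp only [lowBits, ext, Fin.castLE]
  rw [dif_pos m.isLt]

@[simp] lemma ext_hi (k : ℕ) (i j : Bool) (b : Fin (2*k+1) → Bool) :
    ext k i j b ⟨2*k+2, by omega⟩ = i := by simp [ext]
@[simp] lemma ext_mid (k : ℕ) (i j : Bool) (b : Fin (2*k+1) → Bool) :
    ext k i j b ⟨2*k+1, by omega⟩ = j := by simp [ext]

lemma ext_inj {k : ℕ} {i j i' j' : Bool} {b b' : Fin (2*k+1) → Bool}
    (h : ext k i j b = ext k i' j' b') : i = i' ∧ j = j' ∧ b = b' := by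
  refine ⟨?_, ?_, ?_⟩
  · have := congrFun h ⟨2*k+2, by omega⟩; simpa using this
  · have := congrFun h ⟨2*k+1, by omega⟩; simpa using this
  · have := congrArg lowBits h; rwa [lowBits_ext, lowBits_ext] at this

lemma ext_surj {k : ℕ} (v : Fin (2*(k+1)+1) → Bool) :
    v = ext k (v ⟨2*k+2, by omega⟩) (v ⟨2*k+1, by omega⟩) (lowBits v) := by
  funext m
  simp only [ext, lowBits]
  split_ifs with h1 h2
  · congr 1
  · congr 1; apply Fin.ext; simp [h2]
  · congr 1; apply Fin.ext; simp only []; omega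

-- adjacency lift
lemma adj_ext {k : ℕ} (i j : Bool) {a b : Fin (2*k+1) → Bool}
    (h : (TwistedCube k).Adj a b) : (TwistedCube (k+1)).Adj (ext k i j a) (ext k i j b) := by
  have hne : ext k i j a ≠ ext k i j b := fun he => h.ne (ext_inj he).2.2
  exact ⟨hne, Or.inl ⟨by simp, by simp, by rwa [lowBits_ext, lowBits_ext]⟩⟩

-- parity computations
lemma length_filter_range (m : ℕ) (p : ℕ → Bool) :
    ((List.range m).filter p).length = ((Finset.range m).filter (fun j => p j = true)).card := by
  rw [Finset.card_filter]
  induction m with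
  | zero => rfl
  | succ n ih =>
    rw [List.range_succ, List.filter_append, List.length_append, ih, Finset.sum_range_succ]
    by_cases h : p n <;> simp [h]

lemma parity_ext (k : ℕ) (i j : Bool) (b : Fin (2*k+1) → Bool) :
    parityFn (ext k i j b) (2*k) = parityFn b (2*k) := by
  unfold parityFn
  congr 1
  rw [List.filter_congr]
  intro x hx
  rw [List.mem_range] at hx
  have hx1 : x < 2*k+1 := by omega
  have hx2 : x < 2*(k+1)+1 := by omega
  rw [dif_pos hx1, dif_pos hx2]
  simp only [ext]
  rw [dif_pos hx1]

lemma parity_zeroV (k : ℕ) : parityFn (zeroV k) (2*k) = false := by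
  unfold parityFn zeroV
  simp

lemma parity_sV (k : ℕ) (hk : 1 ≤ k) : parityFn (sV k) (2*k) = true := by
  unfold parityFn sV
  rw [length_filter_range]
  have : (Finset.range (2*k+1)).filter
      (fun j => (if h : j < 2*k+1 then decide (j = 2) else false) = true) = {2} := by
    ext x
    simp only [Finset.mem_filter, Finset.mem_range, Finset.mem_singleton]
    constructor
    · rintro ⟨hx, h⟩; rw [dif_pos hx] at h; simpa using h
    · rintro rfl; refine ⟨by omega, ?_⟩; rw [dif_pos (by omega)]; simp
  rw [this]; simp

lemma parity_tV (k : ℕ) (hk : 2 ≤ k) : parityFn (tV k) (2*k) = false := by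
  unfold parityFn tV
  rw [length_filter_range]
  have : (Finset.range (2*k+1)).filter
      (fun j => (if h : j < 2*k+1 then decide (j = 2*k-1 ∨ j = 2) else false) = true)
      = {2*k-1, 2} := by
    ext x
    simp only [Finset.mem_filter, Finset.mem_range, Finset.mem_insert, Finset.mem_singleton]
    constructor
    · rintro ⟨hx, h⟩; rw [dif_pos hx] at h; simpa using h
    · rintro (rfl | rfl)
      · refine ⟨by omega, ?_⟩; rw [dif_pos (by omega)]; simp
      · refine ⟨by omega, ?_⟩; rw [dif_pos (by omega)]; simp
  rw [this]
  rw [Finset.card_insert_of_notMem (by simp; omega), Finset.card_singleton]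
  simp

lemma parity_eV (k : ℕ) (hk : 1 ≤ k) : parityFn (eV k) (2*k) = false := by
  unfold parityFn eV
  rw [length_filter_range]
  have : (Finset.range (2*k+1)).filter
      (fun j => (if h : j < 2*k+1 then decide (j = 2*k ∨ j = 2*k-1) else false) = true)
      = {2*k, 2*k-1} := by
    ext x
    simp only [Finset.mem_filter, Finset.mem_range, Finset.mem_insert, Finset.mem_singleton]
    constructor
    · rintro ⟨hx, h⟩; rw [dif_pos hx] at h; simpa using h
    · rintro (rfl | rfl)
      · refine ⟨by omega, ?_⟩; rw [dif_pos (by omega)]; simp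
      · refine ⟨by omega, ?_⟩; rw [dif_pos (by omega)]; simp
  rw [this]
  rw [Finset.card_insert_of_notMem (by simp; omega), Finset.card_singleton]
  simp
-- ext of special vertices
lemma ext_zeroV (k : ℕ) : ext k false false (zeroV k) = zeroV (k+1) := by
  funext m; simp only [ext, zeroV]; split_ifs <;> rfl

lemma ext_eV (k : ℕ) : ext k true true (zeroV k) = eV (k+1) := by
  funext m; simp only [ext, zeroV, eV]
  have := m.isLt
  split_ifs with h1 h2 <;> [skip; skip; skip] <;> symm
  · simp; omega
  · simp; omega
  · simp; omega

lemma ext_sV (k : ℕ) (hk : 1 ≤ k) : ext k false false (sV k) = sV (k+1) := by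
  funext m; simp only [ext, sV]
  have := m.isLt
  split_ifs with h1 h2 <;> symm
  · rfl
  · simp; omega
  · simp; omega

lemma ext_tV (k : ℕ) (hk : 1 ≤ k) : ext k false true (sV k) = tV (k+1) := by
  funext m; simp only [ext, sV, tV]
  have := m.isLt
  split_ifs with h1 h2 <;> symm
  · simp; omega
  · simp; omega
  · simp; omega

-- distinctness of the four special vertices (k ≥ 2)
lemma zeroV_ne_sV (k : ℕ) (hk : 2 ≤ k) : zeroV k ≠ sV k := fun h => by
  have := congrFun h ⟨2, by omega⟩; simp [zeroV, sV] at this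
lemma zeroV_ne_tV (k : ℕ) (hk : 2 ≤ k) : zeroV k ≠ tV k := fun h => by
  have := congrFun h ⟨2, by omega⟩; simp [zeroV, tV] at this
lemma eV_ne_sV (k : ℕ) (hk : 2 ≤ k) : eV k ≠ sV k := fun h => by
  have := congrFun h ⟨2, by omega⟩; simp [eV, sV] at this; omega
lemma eV_ne_tV (k : ℕ) (hk : 2 ≤ k) : eV k ≠ tV k := fun h => by
  have := congrFun h ⟨2, by omega⟩; simp [eV, tV] at this; omega
lemma zeroV_ne_eV (k : ℕ) (hk : 2 ≤ k) : zeroV k ≠ eV k := fun h => by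
  have := congrFun h ⟨2*k, by omega⟩; simp [zeroV, eV] at this
lemma sV_ne_tV (k : ℕ) (hk : 2 ≤ k) : sV k ≠ tV k := fun h => by
  have := congrFun h ⟨2*k-1, by omega⟩; simp [sV, tV] at this; omega

-- cross adjacency
lemma adj_cross {k : ℕ} {i j i' j' : Bool} (b : Fin (2*k+1) → Bool)
    (hne : (i, j) ≠ (i', j'))
    (hcr : (i' = !i ∧ j' = j) ∨
      (parityFn b (2*k) = false ∧ i' = !i ∧ j' = !j) ∨
      (parityFn b (2*k) = true ∧ i' = i ∧ j' = !j)) :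
    (TwistedCube (k+1)).Adj (ext k i j b) (ext k i' j' b) := by
  refine ⟨fun h => hne (by obtain ⟨h1, h2, _⟩ := ext_inj h; rw [h1, h2]), Or.inr (Or.inl ?_)⟩
  refine ⟨(lowBits_ext k i' j' b).trans (lowBits_ext k i j b).symm, ?_⟩
  rw [parity_ext] at *
  rcases hcr with ⟨h1, h2⟩ | ⟨hp, h1, h2⟩ | ⟨hp, h1, h2⟩
  · exact Or.inl (by simp [h1, h2])
  · exact Or.inr (Or.inl ⟨hp, by simp [h1], by simp [h2]⟩)
  · exact Or.inr (Or.inr ⟨hp, by simp [h1], by simp [h2]⟩)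
lemma ext_injective (k : ℕ) (i j : Bool) : Function.Injective (ext k i j) :=
  fun _ _ h => (ext_inj h).2.2

lemma disj_map_ext {k : ℕ} {p q : Bool × Bool} (h : p ≠ q)
    (X Y : List (Fin (2*k+1) → Bool)) :
    (X.map (ext k p.1 p.2)).Disjoint (Y.map (ext k q.1 q.2)) := by
  intro a haX haY
  obtain ⟨u, _, rfl⟩ := List.mem_map.mp haX
  obtain ⟨w, _, hw⟩ := List.mem_map.mp haY
  obtain ⟨h1, h2, _⟩ := ext_inj hw.symm
  exact h (Prod.ext h1 h2)

lemma glue_ne {k : ℕ} (a1 a2 b1 b2 : Bool × Bool) {u u' : Fin (2*k+1) → Bool} (h : u ≠ u') :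
    s(ext k a1.1 a1.2 u, ext k a2.1 a2.2 u) ≠ s(ext k b1.1 b1.2 u', ext k b2.1 b2.2 u') := by
  intro hq
  rw [Sym2.eq_iff] at hq
  rcases hq with ⟨h1, _⟩ | ⟨h1, _⟩ <;> exact h (ext_inj h1).2.2

lemma copy_glue_ne {k : ℕ} (i j : Bool) {a1 a2 : Bool × Bool} (hne : a1 ≠ a2)
    (u : Fin (2*k+1) → Bool) (e₀ : Sym2 (Fin (2*k+1) → Bool)) :
    Sym2.map (ext k i j) e₀ ≠ s(ext k a1.1 a1.2 u, ext k a2.1 a2.2 u) := by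
  induction e₀ using Sym2.ind with
  | _ c d =>
    intro hq
    rw [Sym2.map_pair_eq, Sym2.eq_iff] at hq
    rcases hq with ⟨h1, h2⟩ | ⟨h1, h2⟩
    · obtain ⟨p1, q1, _⟩ := ext_inj h1
      obtain ⟨p2, q2, _⟩ := ext_inj h2
      exact hne (Prod.ext (p1.symm.trans p2) (q1.symm.trans q2))
    · obtain ⟨p1, q1, _⟩ := ext_inj h1
      obtain ⟨p2, q2, _⟩ := ext_inj h2
      exact hne (Prod.ext (p2.symm.trans p1) (q2.symm.trans q1))

lemma map_ext_inj {k : ℕ} {i j i' j' : Bool} {e₀ e₁ : Sym2 (Fin (2*k+1) → Bool)}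
    (h : Sym2.map (ext k i j) e₀ = Sym2.map (ext k i' j') e₁) : e₀ = e₁ := by
  induction e₀ using Sym2.ind with
  | _ c d =>
    induction e₁ using Sym2.ind with
    | _ c' d' =>
      rw [Sym2.map_pair_eq, Sym2.map_pair_eq, Sym2.eq_iff] at h
      rcases h with ⟨h1, h2⟩ | ⟨h1, h2⟩
      · rw [(ext_inj h1).2.2, (ext_inj h2).2.2]
      · rw [(ext_inj h1).2.2, (ext_inj h2).2.2, Sym2.eq_swap]

lemma big_props {k : ℕ} (X : List (Fin (2*k+1) → Bool)) {x y : Fin (2*k+1) → Bool}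
    (hX : X.Chain' (TwistedCube k).Adj) (hx : X.head? = some x) (hy : X.getLast? = some y)
    (hnd : X.Nodup) (hall : ∀ v, v ∈ X)
    (p1 p2 p3 p4 : Bool × Bool)
    (hds : ([p1, p2, p3, p4] : List (Bool × Bool)).Nodup)
    (hfull : ∀ q : Bool × Bool, q ∈ [p1, p2, p3, p4])
    (ha1 : (TwistedCube (k+1)).Adj (ext k p1.1 p1.2 y) (ext k p2.1 p2.2 y))
    (ha2 : (TwistedCube (k+1)).Adj (ext k p2.1 p2.2 x) (ext k p3.1 p3.2 x))
    (ha3 : (TwistedCube (k+1)).Adj (ext k p3.1 p3.2 y) (ext k p4.1 p4.2 y)) :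
    ∃ B : List (Fin (2*(k+1)+1) → Bool),
      B.Chain' (TwistedCube (k+1)).Adj ∧
      B.head? = some (ext k p1.1 p1.2 x) ∧ B.getLast? = some (ext k p4.1 p4.2 x) ∧
      B.Nodup ∧ (∀ v, v ∈ B) ∧
      (∀ e ∈ eL B, (∃ (i j : Bool) (e₀ : Sym2 (Fin (2*k+1) → Bool)),
          e₀ ∈ eL X ∧ e = Sym2.map (ext k i j) e₀) ∨
        e = s(ext k p1.1 p1.2 y, ext k p2.1 p2.2 y) ∨
        e = s(ext k p2.1 p2.2 x, ext k p3.1 p3.2 x) ∨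
        e = s(ext k p3.1 p3.2 y, ext k p4.1 p4.2 y)) := by
  classical
  set f1 := ext k p1.1 p1.2
  set f2 := ext k p2.1 p2.2
  set f3 := ext k p3.1 p3.2
  set f4 := ext k p4.1 p4.2
  set B1 := X.map f1
  set B2 := X.reverse.map f2
  set B3 := X.map f3
  set B4 := X.reverse.map f4
  have hXrev : ∀ u, u ∈ X.reverse := fun u => List.mem_reverse.mpr (hall u)
  have hB1h : B1.head? = some (f1 x) := by rw [List.head?_map, hx]; rfl
  have hB1l : B1.getLast? = some (f1 y) := by rw [List.getLast?_map, hy]; rfl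
  have hB2h : B2.head? = some (f2 y) := by rw [List.head?_map, List.head?_reverse, hy]; rfl
  have hB2l : B2.getLast? = some (f2 x) := by rw [List.getLast?_map, List.getLast?_reverse, hx]; rfl
  have hB3h : B3.head? = some (f3 x) := by rw [List.head?_map, hx]; rfl
  have hB3l : B3.getLast? = some (f3 y) := by rw [List.getLast?_map, hy]; rfl
  have hB4h : B4.head? = some (f4 y) := by rw [List.head?_map, List.head?_reverse, hy]; rfl
  have hB4l : B4.getLast? = some (f4 x) := by rw [List.getLast?_map, List.getLast?_reverse, hx]; rfl
  have hc1 : B1.Chain' (TwistedCube (k+1)).Adj :=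
    (List.isChain_map _).mpr (hX.imp fun _ _ h => adj_ext _ _ h)
  have hc3 : B3.Chain' (TwistedCube (k+1)).Adj :=
    (List.isChain_map _).mpr (hX.imp fun _ _ h => adj_ext _ _ h)
  have hc2 : B2.Chain' (TwistedCube (k+1)).Adj :=
    (List.isChain_map _).mpr ((List.isChain_reverse).mpr (hX.imp fun _ _ h => adj_ext _ _ h.symm))
  have hc4 : B4.Chain' (TwistedCube (k+1)).Adj :=
    (List.isChain_map _).mpr ((List.isChain_reverse).mpr (hX.imp fun _ _ h => adj_ext _ _ h.symm))
  have hp12 : p1 ≠ p2 := by simp at hds; tauto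
  have hp13 : p1 ≠ p3 := by simp at hds; tauto
  have hp14 : p1 ≠ p4 := by simp at hds; tauto
  have hp23 : p2 ≠ p3 := by simp at hds; tauto
  have hp24 : p2 ≠ p4 := by simp at hds; tauto
  have hp34 : p3 ≠ p4 := by simp at hds; tauto
  have heL : eL (B1 ++ (B2 ++ (B3 ++ B4))) =
      eL B1 ++ s(f1 y, f2 y) :: (eL B2 ++ s(f2 x, f3 x) :: (eL B3 ++ s(f3 y, f4 y) :: eL B4)) := by
    rw [eL_append _ _ (f1 y) (f2 y) hB1l (by rw [List.head?_append, hB2h]; rfl)]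
    rw [eL_append _ _ (f2 x) (f3 x) hB2l (by rw [List.head?_append, hB3h]; rfl)]
    rw [eL_append _ _ (f3 y) (f4 y) hB3l hB4h]
  refine ⟨B1 ++ (B2 ++ (B3 ++ B4)), ?_, ?_, ?_, ?_, ?_, ?_⟩
  · -- Chain'
    change List.IsChain _ _
    rw [List.isChain_append, List.isChain_append, List.isChain_append]
    refine ⟨hc1, ⟨hc2, ⟨hc3, hc4, ?_⟩, ?_⟩, ?_⟩
    · intro a ha b hb
      rw [hB3l] at ha; rw [hB4h] at hb
      simp only [Option.mem_def, Option.some.injEq] at ha hb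
      subst ha hb; exact ha3
    · intro a ha b hb
      rw [hB2l] at ha; rw [List.head?_append, hB3h] at hb
      simp only [Option.mem_def, Option.some.injEq, Option.or] at ha hb
      subst ha hb; exact ha2
    · intro a ha b hb
      rw [hB1l] at ha; rw [List.head?_append, hB2h] at hb
      simp only [Option.mem_def, Option.some.injEq, Option.or] at ha hb
      subst ha hb; exact ha1
  · -- head?
    rw [List.head?_append, hB1h]; rfl
  · -- getLast?
    rw [List.getLast?_append, List.getLast?_append, List.getLast?_append, hB4l]; rfl
  · -- Nodup
    rw [List.nodup_append, List.nodup_append, List.nodup_append]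
    have hrev : X.reverse.Nodup := List.nodup_reverse.mpr hnd
    refine ⟨hnd.map (ext_injective k _ _), ⟨hrev.map (ext_injective k _ _),
      ⟨hnd.map (ext_injective k _ _), hrev.map (ext_injective k _ _),
        List.disjoint_iff_ne.mp (disj_map_ext hp34 _ _)⟩, ?_⟩, ?_⟩
    · rw [← List.disjoint_iff_ne, List.disjoint_append_right]
      exact ⟨disj_map_ext hp23 _ _, disj_map_ext hp24 _ _⟩
    · rw [← List.disjoint_iff_ne, List.disjoint_append_right, List.disjoint_append_right]
      exact ⟨disj_map_ext hp12 _ _, disj_map_ext hp13 _ _, disj_map_ext hp14 _ _⟩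
  · -- complete
    intro v
    have hv := hfull (v ⟨2*k+2, by omega⟩, v ⟨2*k+1, by omega⟩)
    have hsurj : ∀ p : Bool × Bool, (v ⟨2*k+2, by omega⟩, v ⟨2*k+1, by omega⟩) = p →
        ∀ Y : List (Fin (2*k+1) → Bool), (∀ u, u ∈ Y) → v ∈ Y.map (ext k p.1 p.2) := by
      rintro p rfl Y hY
      exact List.mem_map.mpr ⟨lowBits v, hY _, (ext_surj v).symm⟩
    simp only [List.mem_cons, List.not_mem_nil, or_false] at hv
    simp only [List.mem_append]
    rcases hv with hv | hv | hv | hv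
    · exact Or.inl (hsurj _ hv _ hall)
    · exact Or.inr (Or.inl (hsurj _ hv _ hXrev))
    · exact Or.inr (Or.inr (Or.inl (hsurj _ hv _ hall)))
    · exact Or.inr (Or.inr (Or.inr (hsurj _ hv _ hXrev)))
  · -- edges
    intro e he
    rw [heL] at he
    simp only [List.mem_append, List.mem_cons] at he
    have hcopy : ∀ (p : Bool × Bool) (Y : List (Fin (2*k+1) → Bool)),
        e ∈ eL (Y.map (ext k p.1 p.2)) → (∀ e₀ ∈ eL Y, e₀ ∈ eL X) →
        ∃ (i j : Bool) (e₀ : Sym2 (Fin (2*k+1) → Bool)),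
          e₀ ∈ eL X ∧ e = Sym2.map (ext k i j) e₀ := by
      intro p Y hY hmono
      rw [eL_map] at hY
      obtain ⟨e₀, he₀, rfl⟩ := List.mem_map.mp hY
      exact ⟨p.1, p.2, e₀, hmono _ he₀, rfl⟩
    have hmonoX : ∀ e₀ ∈ eL X, e₀ ∈ eL X := fun _ h => h
    have hmonoR : ∀ e₀ ∈ eL X.reverse, e₀ ∈ eL X := by
      intro e₀ h; rwa [eL_reverse, List.mem_reverse] at h
    rcases he with h | h | h | h | h | h | h
    · exact Or.inl (hcopy p1 X h hmonoX)
    · exact Or.inr (Or.inl h)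
    · exact Or.inl (hcopy p2 X.reverse h hmonoR)
    · exact Or.inr (Or.inr (Or.inl h))
    · exact Or.inl (hcopy p3 X h hmonoX)
    · exact Or.inr (Or.inr (Or.inr h))
    · exact Or.inl (hcopy p4 X.reverse h hmonoR)

def Good (k : ℕ) : Prop :=
  ∃ L M : List (Fin (2*k+1) → Bool),
    L.Chain' (TwistedCube k).Adj ∧ M.Chain' (TwistedCube k).Adj ∧
    L.head? = some (zeroV k) ∧ L.getLast? = some (eV k) ∧
    M.head? = some (sV k) ∧ M.getLast? = some (tV k) ∧
    L.Nodup ∧ M.Nodup ∧ (∀ v, v ∈ L) ∧ (∀ v, v ∈ M) ∧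
    (∀ e ∈ eL L, e ∉ eL M)

lemma good_step (k : ℕ) (hk : 2 ≤ k) (h : Good k) : Good (k+1) := by
  obtain ⟨L, M, hcL, hcM, hLh, hLl, hMh, hMl, hndL, hndM, hallL, hallM, hdisj⟩ := h
  have hk1 : 1 ≤ k := by omega
  obtain ⟨B, hcB, hBh, hBl, hndB, hallB, hEB⟩ :=
    big_props L hcL hLh hLl hndL hallL (false, false) (true, false) (false, true) (true, true)
      (by decide) (by decide)
      (adj_cross (eV k) (by decide) (Or.inl ⟨rfl, rfl⟩))
      (adj_cross (zeroV k) (by decide) (Or.inr (Or.inl ⟨parity_zeroV k, rfl, rfl⟩)))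
      (adj_cross (eV k) (by decide) (Or.inl ⟨rfl, rfl⟩))
  obtain ⟨C, hcC, hCh, hCl, hndC, hallC, hEC⟩ :=
    big_props M hcM hMh hMl hndM hallM (false, false) (true, true) (true, false) (false, true)
      (by decide) (by decide)
      (adj_cross (tV k) (by decide) (Or.inr (Or.inl ⟨parity_tV k hk, rfl, rfl⟩)))
      (adj_cross (sV k) (by decide) (Or.inr (Or.inr ⟨parity_sV k hk1, rfl, rfl⟩)))
      (adj_cross (tV k) (by decide) (Or.inr (Or.inl ⟨parity_tV k hk, rfl, rfl⟩)))
  refine ⟨B, C, hcB, hcC, ?_, ?_, ?_, ?_, hndB, hndC, hallB, hallC, ?_⟩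
  · rw [hBh]; simp only []; rw [ext_zeroV]
  · rw [hBl]; simp only []; rw [ext_eV]
  · rw [hCh]; simp only []; rw [ext_sV k hk1]
  · rw [hCl]; simp only []; rw [ext_tV k hk1]
  · intro e he1 he2
    have h1 := hEB e he1
    have h2 := hEC e he2
    have hets : eV k ≠ tV k := eV_ne_tV k hk
    have hess : eV k ≠ sV k := eV_ne_sV k hk
    have hzts : zeroV k ≠ tV k := zeroV_ne_tV k hk
    have hzss : zeroV k ≠ sV k := zeroV_ne_sV k hk
    rcases h1 with ⟨i, j, e₀, he₀, rfl⟩ | h1 | h1 | h1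
    · rcases h2 with ⟨i', j', e₁, he₁, heq⟩ | h2 | h2 | h2
      · exact hdisj e₀ he₀ (map_ext_inj heq ▸ he₁)
      · exact copy_glue_ne i j (by decide) _ e₀ h2
      · exact copy_glue_ne i j (by decide) _ e₀ h2
      · exact copy_glue_ne i j (by decide) _ e₀ h2
    all_goals rcases h2 with ⟨i', j', e₁, he₁, heq⟩ | h2 | h2 | h2
    all_goals first
      | (exact copy_glue_ne i' j' (by decide) _ e₁ (h1 ▸ heq.symm))
      | (rw [h1] at h2; revert h2; first
          | exact glue_ne _ _ _ _ hets
          | exact glue_ne _ _ _ _ hess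
          | exact glue_ne _ _ _ _ hzts
          | exact glue_ne _ _ _ _ hzss)
def v5 (m : ℕ) : Fin (2*2+1) → Bool := fun i => m.testBit i

def baseL : List (Fin (2*2+1) → Bool) :=
  [0, 6, 7, 15, 11, 10, 12, 8, 14, 22, 16, 17, 19, 23, 21, 5, 4, 2, 3, 1, 9, 13, 29, 28, 20, 18, 26, 30, 31, 27, 25, 24].map v5

def baseM : List (Fin (2*2+1) → Bool) :=
  [4, 20, 21, 17, 25, 9, 8, 16, 0, 1, 5, 29, 31, 23, 7, 3, 19, 11, 27, 26, 28, 24, 30, 6, 22, 18, 2, 10, 14, 15, 13, 12].map v5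

set_option maxRecDepth 100000 in
set_option maxHeartbeats 2000000 in
lemma good_base : Good 2 := by
  refine ⟨baseL, baseM, chainP_chain' (by decide), chainP_chain' (by decide), ?_, ?_, ?_, ?_,
    by decide, by decide, by decide, by decide, by decide⟩
  · show some (v5 0) = some (zeroV 2)
    exact congrArg some (by decide)
  · show some (v5 24) = some (eV 2)
    exact congrArg some (by decide)
  · show some (v5 4) = some (sV 2)
    exact congrArg some (by decide)
  · show some (v5 12) = some (tV 2)
    exact congrArg some (by decide)

lemma good_all (k : ℕ) (hk : 2 ≤ k) : Good k :=
  Nat.le_induction good_base (fun n hn h => good_step n hn h) k hk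

/-- For every odd `n = 2k+1 ≥ 5`, `TQ_n` contains two edge-disjoint
Hamiltonian paths `P` from `00(0)^{n-5}000` to `11(0)^{n-5}000` and `Q` from
`00(0)^{n-5}100` to `01(0)^{n-5}100`. -/
theorem twistedCube_two_edge_disjoint_hamiltonian_paths (k : ℕ) (hk : 2 ≤ k) :
    ∃ (P : (TwistedCube k).Walk (fun _ => false)
        (fun i => decide ((i : ℕ) = 2*k ∨ (i : ℕ) = 2*k-1)))
      (Q : (TwistedCube k).Walk (fun i => decide ((i : ℕ) = 2))
        (fun i => decide ((i : ℕ) = 2*k-1 ∨ (i : ℕ) = 2))),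
      P.IsPath ∧ P.IsHamiltonian ∧ Q.IsPath ∧ Q.IsHamiltonian ∧
      ∀ e, e ∈ P.edges → e ∉ Q.edges := by
  obtain ⟨L, M, hcL, hcM, hLh, hLl, hMh, hMl, hndL, hndM, hallL, hallM, hdisj⟩ := good_all k hk
  obtain ⟨P, hPs, hPe⟩ := exists_walk L hcL hLh hLl
  obtain ⟨Q, hQs, hQe⟩ := exists_walk M hcM hMh hMl
  refine ⟨P, Q, ?_, ?_, ?_, ?_, ?_⟩
  · exact SimpleGraph.Walk.IsPath.mk' (hPs ▸ hndL)
  · intro v; have h := List.count_eq_one_of_mem hndL (hallL v); rw [← hPs] at h; exact h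
  · exact SimpleGraph.Walk.IsPath.mk' (hQs ▸ hndM)
  · intro v; have h := List.count_eq_one_of_mem hndM (hallM v); rw [← hQs] at h; exact h
  · intro e he; have h := hdisj e; rw [← hPe, ← hQe] at h; exact h he
end

section
/- For every odd integer n ≥ 3, the twisted cube TQ_n contains two vertex-disjoint cycles, each on exactly 2^(n-1) vertices, whose vertex sets partition V(TQ_n). -/
def extend (k : ℕ) (x y : Bool) (v : Fin (2*k+1) → Bool) : Fin (2*(k+1)+1) → Bool :=
  fun i => if h : (i : ℕ) < 2*k+1 then v ⟨i, h⟩ else if (i : ℕ) = 2*k+1 then y else x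

lemma lowBits_extend (k : ℕ) (x y : Bool) (v : Fin (2*k+1) → Bool) :
    lowBits (extend k x y v) = v := by
  funext i
  have hi : (i : ℕ) < 2*k+1 := i.2
  simp [lowBits, extend, hi]

lemma extend_top (k : ℕ) (x y : Bool) (v : Fin (2*k+1) → Bool) :
    extend k x y v ⟨2*k+2, by omega⟩ = x := by
  simp [extend]

lemma extend_sec (k : ℕ) (x y : Bool) (v : Fin (2*k+1) → Bool) :
    extend k x y v ⟨2*k+1, by omega⟩ = y := by
  simp [extend]

lemma extend_inj (k : ℕ) (x y : Bool) : Function.Injective (extend k x y) := by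
  intro v w h
  rw [← lowBits_extend k x y v, ← lowBits_extend k x y w, h]

lemma extend_ne_top {k : ℕ} {x y x' y' : Bool} (h : x ≠ x') (v w : Fin (2*k+1) → Bool) :
    extend k x y v ≠ extend k x' y' w := by
  intro he
  apply h
  rw [← extend_top k x y v, he, extend_top]

lemma extend_ne_sec {k : ℕ} {x y x' y' : Bool} (h : y ≠ y') (v w : Fin (2*k+1) → Bool) :
    extend k x y v ≠ extend k x' y' w := by
  intro he
  apply h
  rw [← extend_sec k x y v, he, extend_sec]

lemma extend_decompose {k : ℕ} (w : Fin (2*(k+1)+1) → Bool) :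
    w = extend k (w ⟨2*k+2, by omega⟩) (w ⟨2*k+1, by omega⟩) (lowBits w) := by
  funext i
  simp only [extend]
  split
  · rename_i h
    show w i = lowBits w ⟨i, h⟩
    unfold lowBits
    rfl
  · rename_i h
    split
    · rename_i h2
      show w i = w ⟨2*k+1, by omega⟩
      congr 1
      exact Fin.ext h2
    · rename_i h2
      have h3 : (i : ℕ) = 2*k+2 := by omega
      show w i = w ⟨2*k+2, by omega⟩
      congr 1
      exact Fin.ext h3

lemma parityFn_extend (k : ℕ) (x y : Bool) (v : Fin (2*k+1) → Bool) :
    parityFn (extend k x y v) (2*k) = parityFn v (2*k) := by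
  have hl : (List.filter (fun j => if h : j < 2*(k+1)+1 then extend k x y v ⟨j, h⟩ else false) (List.range (2*k+1))) = (List.filter (fun j => if h : j < 2*k+1 then v ⟨j, h⟩ else false) (List.range (2*k+1))) := by
    apply List.filter_congr
    intro j hj
    have hj1 : j < 2*k+1 := List.mem_range.mp hj
    have hj2 : j < 2*(k+1)+1 := by omega
    simp only [hj1, hj2, dif_pos]
    simp [extend, hj1]
  unfold parityFn
  rw [hl]


lemma tc_adj (k : ℕ) (b b' : Fin (2*(k+1)+1) → Bool) :
    (TwistedCube (k+1)).Adj b b' ↔ (b ≠ b' ∧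
        ((b ⟨2*k+2, by omega⟩ = b' ⟨2*k+2, by omega⟩ ∧ b ⟨2*k+1, by omega⟩ = b' ⟨2*k+1, by omega⟩ ∧
          (TwistedCube k).Adj (lowBits b) (lowBits b')) ∨
         crossRel k b b' ∨ crossRel k b' b)) := Iff.rfl

lemma adj_extend_inner {k : ℕ} (x y : Bool) {v w : Fin (2*k+1) → Bool}
    (h : (TwistedCube k).Adj v w) :
    (TwistedCube (k+1)).Adj (extend k x y v) (extend k x y w) := by
  rw [tc_adj]
  refine ⟨fun he => h.ne (extend_inj k x y he), Or.inl ?_⟩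
  rw [extend_top, extend_top, extend_sec, extend_sec, lowBits_extend, lowBits_extend]
  exact ⟨rfl, rfl, h⟩

lemma adj_extend_topflip {k : ℕ} (x y : Bool) (v : Fin (2*k+1) → Bool) :
    (TwistedCube (k+1)).Adj (extend k x y v) (extend k (!x) y v) := by
  rw [tc_adj]
  refine ⟨extend_ne_top (by simp) v v, Or.inr (Or.inl ?_)⟩
  refine ⟨by rw [lowBits_extend, lowBits_extend], Or.inl ?_⟩
  rw [extend_top, extend_top, extend_sec, extend_sec]
  exact ⟨rfl, rfl⟩

lemma adj_extend_secflip {k : ℕ} (x y : Bool) {v : Fin (2*k+1) → Bool}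
    (hp : parityFn v (2*k) = true) :
    (TwistedCube (k+1)).Adj (extend k x y v) (extend k x (!y) v) := by
  rw [tc_adj]
  refine ⟨extend_ne_sec (by simp) v v, Or.inr (Or.inl ?_)⟩
  refine ⟨by rw [lowBits_extend, lowBits_extend], Or.inr (Or.inr ?_)⟩
  rw [extend_top, extend_top, extend_sec, extend_sec, parityFn_extend]
  exact ⟨hp, rfl, rfl⟩

def homExtend (k : ℕ) (x y : Bool) : TwistedCube k →g TwistedCube (k+1) :=
  ⟨extend k x y, fun h => adj_extend_inner x y h⟩

lemma homExtend_apply (k : ℕ) (x y : Bool) (v : Fin (2*k+1) → Bool) :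
    homExtend k x y v = extend k x y v := rfl

open SimpleGraph Walk

def IsHam (k : ℕ) : Prop := ∃ (a : Fin (2*k+1) → Bool) (C : (TwistedCube k).Walk a a),
  C.IsCycle ∧ C.support.tail.length = 2^(2*k+1) ∧ ∀ v, v ∈ C.support

lemma mem_tail_of_mem_support {V : Type*} {G : SimpleGraph V} {a : V} {C : G.Walk a a}
    (hC : C ≠ Walk.nil) {w : V} (hw : w ∈ C.support) : w ∈ C.support.tail := by
  cases C with
  | nil => exact absurd rfl hC
  | cons h p =>
    simp only [Walk.support_cons, List.tail_cons, List.mem_cons] at hw ⊢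
    rcases hw with rfl | hw
    · exact p.end_mem_support
    · exact hw

lemma ham_path (k : ℕ) (hham : IsHam k) (v₀ : Fin (2*k+1) → Bool) :
    ∃ (s : Fin (2*k+1) → Bool) (q : (TwistedCube k).Walk v₀ s),
      q.IsPath ∧ (∀ w, w ∈ q.support) ∧ q.support.length = 2^(2*k+1) ∧ v₀ ≠ s := by
  obtain ⟨a, C, hC, hlen, hcov⟩ := hham
  have hv : v₀ ∈ C.support := hcov v₀
  have hC' : (C.rotate v₀ hv).IsCycle := hC.rotate hv
  have hrot := C.support_rotate v₀ hv
  have hcov' : ∀ w, w ∈ (C.rotate v₀ hv).support.tail := by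
    intro w
    exact hrot.mem_iff.mpr (mem_tail_of_mem_support hC.ne_nil (hcov w))
  have hlen' : (C.rotate v₀ hv).support.tail.length = 2^(2*k+1) := by
    rw [hrot.perm.length_eq, hlen]
  set C' := C.rotate v₀ hv with hC'def
  clear_value C'
  cases C' with
  | nil => exact absurd rfl hC'.ne_nil
  | cons h p =>
    rename_i s
    rw [Walk.cons_isCycle_iff] at hC'
    refine ⟨s, p.reverse, hC'.1.reverse, ?_, ?_, h.ne⟩
    · intro w
      rw [Walk.support_reverse, List.mem_reverse]
      simpa using hcov' w
    · rw [Walk.support_reverse, List.length_reverse]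
      simpa using hlen'

lemma adj_top01 {k : ℕ} (y : Bool) (v : Fin (2*k+1) → Bool) :
    (TwistedCube (k+1)).Adj (extend k false y v) (extend k true y v) := by
  simpa using adj_extend_topflip false y v

lemma mem_map_support {k : ℕ} (x y : Bool) {a b : Fin (2*k+1) → Bool}
    (q : (TwistedCube k).Walk a b) {w : Fin (2*(k+1)+1) → Bool}
    (hw : w ∈ (q.map (homExtend k x y)).support) :
    ∃ u, u ∈ q.support ∧ w = extend k x y u := by
  rw [Walk.support_map] at hw
  obtain ⟨u, hu, rfl⟩ := List.mem_map.mp hw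
  exact ⟨u, hu, rfl⟩

lemma cycle_pair (k : ℕ) (hham : IsHam k) (y : Bool) :
    ∃ (c : Fin (2*(k+1)+1) → Bool) (C : (TwistedCube (k+1)).Walk c c),
      C.IsCycle ∧ C.support.tail.length = 2^(2*(k+1)) ∧
      (∀ w, w ∈ C.support ↔ w ⟨2*k+1, by omega⟩ = y) := by
  obtain ⟨s, q, hq, hcov, hlen, hne⟩ := ham_path k hham (fun _ => false)
  generalize hv₀ : (fun _ => false : Fin (2*k+1) → Bool) = v₀ at q hne
  set F0 := homExtend k false y
  set F1 := homExtend k true y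
  have h1 : (TwistedCube (k+1)).Adj (extend k false y s) (extend k true y s) := adj_top01 y s
  have h2 : (TwistedCube (k+1)).Adj (extend k true y v₀) (extend k false y v₀) :=
    (adj_top01 y v₀).symm
  set P : (TwistedCube (k+1)).Walk (extend k false y v₀) (extend k true y v₀) :=
    (q.map F0).append (Walk.cons h1 (q.map F1).reverse) with hP
  have hsupP : P.support = q.support.map (extend k false y)
      ++ (q.support.map (extend k true y)).reverse := by
    erw [hP, Walk.support_append, Walk.support_cons, List.tail_cons, Walk.support_reverse,
      Walk.support_map, Walk.support_map]
    rfl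
  have hPpath : P.IsPath := by
    rw [Walk.isPath_def, hsupP]
    refine List.Nodup.append ?_ ?_ ?_
    · exact hq.support_nodup.map (extend_inj k false y)
    · exact List.nodup_reverse.mpr (hq.support_nodup.map (extend_inj k true y))
    · intro w hw1 hw2
      rw [List.mem_reverse] at hw2
      obtain ⟨u1, _, rfl⟩ := List.mem_map.mp hw1
      obtain ⟨u2, _, he⟩ := List.mem_map.mp hw2
      exact extend_ne_top (by simp) u2 u1 he
  have hedge : s(extend k true y v₀, extend k false y v₀) ∉ P.edges := by
    erw [hP, Walk.edges_append, Walk.edges_cons]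
    intro hmem
    rcases List.mem_append.mp hmem with hmem | hmem
    · have := Walk.fst_mem_support_of_mem_edges _ hmem
      obtain ⟨u, _, he⟩ := mem_map_support false y q this
      exact extend_ne_top (by simp) v₀ u he
    · rcases List.mem_cons.mp hmem with hmem | hmem
      · rcases Sym2.eq_iff.mp hmem with ⟨he1, he2⟩ | ⟨he1, he2⟩
        · exact extend_ne_top (by simp) v₀ s he1
        · exact hne (extend_inj k false y he2)
      · erw [Walk.edges_reverse, List.mem_reverse] at hmem
        have := Walk.snd_mem_support_of_mem_edges _ hmem
        obtain ⟨u, _, he⟩ := mem_map_support true y q this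
        exact extend_ne_top (by simp) u v₀ he.symm
  refine ⟨extend k true y v₀, Walk.cons h2 P, ?_, ?_, ?_⟩
  · rw [Walk.cons_isCycle_iff]
    exact ⟨hPpath, hedge⟩
  · rw [Walk.support_cons, List.tail_cons, hsupP]
    rw [List.length_append, List.length_reverse, List.length_map, List.length_map, hlen]
    rw [show 2*(k+1) = (2*k+1)+1 by ring, pow_succ]
    ring
  · intro w
    rw [Walk.support_cons, List.mem_cons, hsupP, List.mem_append, List.mem_reverse]
    constructor
    · rintro (rfl | hw | hw)
      · exact extend_sec k true y v₀
      · obtain ⟨u, _, rfl⟩ := List.mem_map.mp hw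
        exact extend_sec k false y u
      · obtain ⟨u, _, rfl⟩ := List.mem_map.mp hw
        exact extend_sec k true y u
    · intro hy
      have hd := extend_decompose (k := k) w
      rw [hy] at hd
      rcases hx : w ⟨2*k+2, by omega⟩ with _ | _
      · rw [hx] at hd
        refine Or.inr (Or.inl ?_)
        rw [hd]
        exact List.mem_map_of_mem (hcov (lowBits w))
      · rw [hx] at hd
        refine Or.inr (Or.inr ?_)
        rw [hd]
        exact List.mem_map_of_mem (hcov (lowBits w))

lemma parity_allTrue (k : ℕ) :
    parityFn (fun _ => true : Fin (2*k+1) → Bool) (2*k) = true := by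
  unfold parityFn
  apply decide_eq_true
  have h : (List.range (2*k+1)).filter
      (fun j => if h : j < 2*k+1 then (fun _ => true : Fin (2*k+1) → Bool) ⟨j, h⟩ else false)
      = List.range (2*k+1) := by
    apply List.filter_eq_self.mpr
    intro j hj
    simp [List.mem_range.mp hj]
  rw [h, List.length_range]
  omega

lemma adj_sec01 {k : ℕ} (x : Bool) {v : Fin (2*k+1) → Bool} (hp : parityFn v (2*k) = true) :
    (TwistedCube (k+1)).Adj (extend k x false v) (extend k x true v) := by
  simpa using adj_extend_secflip x false hp

lemma ham_step (k : ℕ) (hham : IsHam k) : IsHam (k+1) := by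
  obtain ⟨s, q, hq, hcov, hlen, hne⟩ := ham_path k hham (fun _ => true)
  have hp : parityFn (fun _ => true : Fin (2*k+1) → Bool) (2*k) = true := parity_allTrue k
  generalize hv₁ : (fun _ => true : Fin (2*k+1) → Bool) = v₁ at q hne hp
  have h1 : (TwistedCube (k+1)).Adj (extend k false false s) (extend k true false s) :=
    adj_top01 false s
  have h2 : (TwistedCube (k+1)).Adj (extend k true false v₁) (extend k true true v₁) :=
    adj_sec01 true hp
  have h3 : (TwistedCube (k+1)).Adj (extend k true true s) (extend k false true s) :=
    (adj_top01 true s).symm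
  have hcl : (TwistedCube (k+1)).Adj (extend k false true v₁) (extend k false false v₁) :=
    (adj_sec01 false hp).symm
  set P : (TwistedCube (k+1)).Walk (extend k false false v₁) (extend k false true v₁) :=
    (q.map (homExtend k false false)).append (Walk.cons h1
      ((q.map (homExtend k true false)).reverse.append (Walk.cons h2
        ((q.map (homExtend k true true)).append (Walk.cons h3
          (q.map (homExtend k false true)).reverse))))) with hP
  have hsupP : P.support = q.support.map (extend k false false)
      ++ ((q.support.map (extend k true false)).reverse
      ++ (q.support.map (extend k true true)
      ++ (q.support.map (extend k false true)).reverse)) := by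
    erw [hP, Walk.support_append, Walk.support_cons, List.tail_cons, Walk.support_append,
      Walk.support_reverse, Walk.support_cons, List.tail_cons, Walk.support_append,
      Walk.support_cons, List.tail_cons, Walk.support_reverse, Walk.support_map,
      Walk.support_map, Walk.support_map, Walk.support_map]
    rfl
  have hnd : ∀ (x y : Bool), (q.support.map (extend k x y)).Nodup :=
    fun x y => hq.support_nodup.map (extend_inj k x y)
  have hdisj : ∀ (x y x' y' : Bool), (x ≠ x' ∨ y ≠ y') →
      ∀ w, w ∈ q.support.map (extend k x y) → w ∈ q.support.map (extend k x' y') → False := by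
    intro x y x' y' hxy w hw1 hw2
    obtain ⟨u1, _, rfl⟩ := List.mem_map.mp hw1
    obtain ⟨u2, _, he⟩ := List.mem_map.mp hw2
    rcases hxy with hxy | hxy
    · exact extend_ne_top (Ne.symm hxy) u2 u1 he
    · exact extend_ne_sec (Ne.symm hxy) u2 u1 he
  have hPpath : P.IsPath := by
    rw [Walk.isPath_def, hsupP]
    simp only [List.nodup_append', List.mem_append, List.mem_reverse, List.nodup_reverse]
    refine ⟨hnd false false, ⟨hnd true false, ⟨hnd true true, hnd false true, ?_⟩, ?_⟩, ?_⟩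
    · intro w hw1 hw2
      simp only [List.mem_reverse] at hw2
      exact hdisj true true false true (Or.inl (by simp)) w hw1 hw2
    · intro w hw1 hw2
      simp only [List.mem_reverse] at hw1
      simp only [List.mem_append, List.mem_reverse] at hw2
      rcases hw2 with hw2 | hw2
      · exact hdisj true false true true (Or.inr (by simp)) w hw1 hw2
      · exact hdisj true false false true (Or.inl (by simp)) w hw1 hw2
    · intro w hw1 hw2
      simp only [List.mem_append, List.mem_reverse] at hw2
      rcases hw2 with hw2 | hw2 | hw2
      · exact hdisj false false true false (Or.inl (by simp)) w hw1 hw2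
      · exact hdisj false false true true (Or.inl (by simp)) w hw1 hw2
      · exact hdisj false false false true (Or.inr (by simp)) w hw1 hw2
  have hedge : s(extend k false true v₁, extend k false false v₁) ∉ P.edges := by
    erw [hP, Walk.edges_append, Walk.edges_cons, Walk.edges_append, Walk.edges_reverse,
      Walk.edges_cons, Walk.edges_append, Walk.edges_cons, Walk.edges_reverse]
    intro hmem
    simp only [List.mem_append, List.mem_cons, List.mem_reverse] at hmem
    rcases hmem with hmem | hmem | hmem | hmem | hmem | hmem | hmem
    · have := Walk.fst_mem_support_of_mem_edges _ hmem
      obtain ⟨u, _, he⟩ := mem_map_support false false q this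
      exact extend_ne_sec (by simp) v₁ u he
    · rcases Sym2.eq_iff.mp hmem with ⟨he1, he2⟩ | ⟨he1, he2⟩
      · exact extend_ne_sec (by simp) v₁ s he1
      · exact extend_ne_top (by simp) v₁ s he1
    · have := Walk.fst_mem_support_of_mem_edges _ hmem
      obtain ⟨u, _, he⟩ := mem_map_support true false q this
      exact extend_ne_top (by simp) v₁ u he
    · rcases Sym2.eq_iff.mp hmem with ⟨he1, he2⟩ | ⟨he1, he2⟩
      · exact extend_ne_top (by simp) v₁ v₁ he1
      · exact extend_ne_top (by simp) v₁ v₁ he1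
    · have := Walk.fst_mem_support_of_mem_edges _ hmem
      obtain ⟨u, _, he⟩ := mem_map_support true true q this
      exact extend_ne_top (by simp) v₁ u he
    · rcases Sym2.eq_iff.mp hmem with ⟨he1, he2⟩ | ⟨he1, he2⟩
      · exact extend_ne_top (by simp) v₁ s he1
      · exact extend_ne_top (by simp) v₁ s he2
    · have := Walk.snd_mem_support_of_mem_edges _ hmem
      obtain ⟨u, _, he⟩ := mem_map_support false true q this
      exact extend_ne_sec (by simp) v₁ u he
  refine ⟨extend k false true v₁, Walk.cons hcl P, ?_, ?_, ?_⟩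
  · rw [Walk.cons_isCycle_iff]
    exact ⟨hPpath, hedge⟩
  · rw [Walk.support_cons, List.tail_cons, hsupP]
    simp only [List.length_append, List.length_reverse, List.length_map, hlen]
    rw [show 2*(k+1)+1 = (2*k+1)+2 by ring, pow_succ, pow_succ]
    ring
  · intro w
    rw [Walk.support_cons, List.mem_cons, hsupP]
    simp only [List.mem_append, List.mem_reverse]
    have hd := extend_decompose (k := k) w
    have hm : lowBits w ∈ q.support := hcov (lowBits w)
    rcases hx : w ⟨2*k+2, by omega⟩ with _ | _ <;> rcases hy : w ⟨2*k+1, by omega⟩ with _ | _ <;>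
      rw [hx, hy] at hd
    · exact Or.inr (Or.inl (hd ▸ List.mem_map_of_mem hm))
    · exact Or.inr (Or.inr (Or.inr (Or.inr (hd ▸ List.mem_map_of_mem hm))))
    · exact Or.inr (Or.inr (Or.inl (hd ▸ List.mem_map_of_mem hm)))
    · exact Or.inr (Or.inr (Or.inr (Or.inl (hd ▸ List.mem_map_of_mem hm))))

instance instDecCross (k : ℕ) (b b' : Fin (2*(k+1)+1) → Bool) : Decidable (crossRel k b b') := by
  unfold crossRel; infer_instance

instance instDecAdj : ∀ (k : ℕ), DecidableRel (TwistedCube k).Adj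
  | 0 => fun b b' => decidable_of_iff (b ≠ b') (by simp [TwistedCube])
  | (k+1) => fun b b' => by
      haveI : DecidableRel (TwistedCube k).Adj := instDecAdj k
      exact decidable_of_iff _ (tc_adj k b b').symm

def vtx (b2 b1 b0 : Bool) : Fin (2*1+1) → Bool :=
  fun i => if i.val = 0 then b0 else if i.val = 1 then b1 else b2

example : (TwistedCube 1).Adj (vtx false false false) (vtx false false true) := by decide
example : (TwistedCube 1).Adj (vtx false false true) (vtx false true true) := by decide
example : ¬ (TwistedCube 1).Adj (vtx false false false) (vtx false true true) := by decide

def C8 : (TwistedCube 1).Walk (vtx false false false) (vtx false false false) :=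
  .cons (by decide : (TwistedCube 1).Adj (vtx false false false) (vtx false false true))
  (.cons (by decide : (TwistedCube 1).Adj (vtx false false true) (vtx false true true))
  (.cons (by decide : (TwistedCube 1).Adj (vtx false true true) (vtx false true false))
  (.cons (by decide : (TwistedCube 1).Adj (vtx false true false) (vtx true true false))
  (.cons (by decide : (TwistedCube 1).Adj (vtx true true false) (vtx true true true))
  (.cons (by decide : (TwistedCube 1).Adj (vtx true true true) (vtx true false true))
  (.cons (by decide : (TwistedCube 1).Adj (vtx true false true) (vtx true false false))
  (.cons (by decide : (TwistedCube 1).Adj (vtx true false false) (vtx false false false))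
  .nil)))))))

lemma ham1 : IsHam 1 := by
  refine ⟨vtx false false false, C8, ?_, by decide, by decide⟩
  unfold C8
  rw [Walk.cons_isCycle_iff]
  refine ⟨?_, by decide⟩
  rw [Walk.isPath_def]
  decide

lemma isham_all : ∀ k : ℕ, 1 ≤ k → IsHam k := by
  intro k hk
  induction k with
  | zero => omega
  | succ n ih =>
    cases n with
    | zero => exact ham1
    | succ m => exact ham_step (m+1) (ih (by omega))

def C4a : (TwistedCube 1).Walk (vtx false false false) (vtx false false false) :=
  .cons (by decide : (TwistedCube 1).Adj (vtx false false false) (vtx false false true))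
  (.cons (by decide : (TwistedCube 1).Adj (vtx false false true) (vtx true false true))
  (.cons (by decide : (TwistedCube 1).Adj (vtx true false true) (vtx true false false))
  (.cons (by decide : (TwistedCube 1).Adj (vtx true false false) (vtx false false false))
  .nil)))

def C4b : (TwistedCube 1).Walk (vtx false true false) (vtx false true false) :=
  .cons (by decide : (TwistedCube 1).Adj (vtx false true false) (vtx false true true))
  (.cons (by decide : (TwistedCube 1).Adj (vtx false true true) (vtx true true true))
  (.cons (by decide : (TwistedCube 1).Adj (vtx true true true) (vtx true true false))
  (.cons (by decide : (TwistedCube 1).Adj (vtx true true false) (vtx false true false))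
  .nil)))

/-- For every odd `n = 2k+1 ≥ 3`, `TQ_n` contains two vertex-disjoint
cycles, each on exactly `2^(n-1)` vertices, whose vertex sets partition `V(TQ_n)`. -/
theorem twistedCube_two_equal_node_disjoint_cycles (k : ℕ) (hk : 1 ≤ k) :
    ∃ (a b : Fin (2*k+1) → Bool) (C₁ : (TwistedCube k).Walk a a)
      (C₂ : (TwistedCube k).Walk b b),
      C₁.IsCycle ∧ C₂.IsCycle ∧
      C₁.support.tail.length = 2^(2*k) ∧ C₂.support.tail.length = 2^(2*k) ∧
      (∀ v, v ∈ C₁.support → v ∉ C₂.support) ∧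
      (∀ v : Fin (2*k+1) → Bool, v ∈ C₁.support ∨ v ∈ C₂.support) := by
  match k, hk with
  | 1, _ =>
    refine ⟨vtx false false false, vtx false true false, C4a, C4b, ?_, ?_,
      by decide, by decide, by decide, by decide⟩
    · unfold C4a
      rw [Walk.cons_isCycle_iff]
      exact ⟨by rw [Walk.isPath_def]; decide, by decide⟩
    · unfold C4b
      rw [Walk.cons_isCycle_iff]
      exact ⟨by rw [Walk.isPath_def]; decide, by decide⟩
  | (m+2), _ =>
    have hham : IsHam (m+1) := isham_all (m+1) (by omega)
    obtain ⟨a, C₁, hc1, hl1, hm1⟩ := cycle_pair (m+1) hham false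
    obtain ⟨b, C₂, hc2, hl2, hm2⟩ := cycle_pair (m+1) hham true
    refine ⟨a, b, C₁, C₂, hc1, hc2, hl1, hl2, ?_, ?_⟩
    · intro v hv1 hv2
      have h1 := (hm1 v).mp hv1
      have h2 := (hm2 v).mp hv2
      rw [h1] at h2
      exact Bool.false_ne_true h2
    · intro v
      rcases h : v ⟨2*(m+1)+1, by omega⟩ with _ | _
      · exact Or.inl ((hm1 v).mpr h)
      · exact Or.inr ((hm2 v).mpr h)
end

section
/- For every odd integer n ≥ 3, TQ_n can be vertex-partitioned into two induced subgraphs of 2^{n-1} vertices each, both of which are Hamiltonian. -/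
def extBits (m : ℕ) (t2 t1 : Bool) (v : Fin (2*m+1) → Bool) : Fin (2*(m+1)+1) → Bool :=
  fun i => if h : (i : ℕ) < 2*m+1 then v ⟨i, h⟩ else if (i : ℕ) = 2*m+1 then t1 else t2

@[simp] lemma lowBits_extBits (m : ℕ) (t2 t1 : Bool) (v : Fin (2*m+1) → Bool) :
    lowBits (extBits m t2 t1 v) = v := by
  funext i
  simp [lowBits, extBits, i.isLt]

@[simp] lemma extBits_hi (m : ℕ) (t2 t1 : Bool) (v : Fin (2*m+1) → Bool) :
    extBits m t2 t1 v ⟨2*m+2, by omega⟩ = t2 := by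
  simp only [extBits]
  rw [dif_neg (by omega)]
  simp +decide

@[simp] lemma extBits_mid (m : ℕ) (t2 t1 : Bool) (v : Fin (2*m+1) → Bool) :
    extBits m t2 t1 v ⟨2*m+1, by omega⟩ = t1 := by
  simp only [extBits]
  rw [dif_neg (by omega)]
  simp

lemma extBits_surj (m : ℕ) (b : Fin (2*(m+1)+1) → Bool) :
    extBits m (b ⟨2*m+2, by omega⟩) (b ⟨2*m+1, by omega⟩) (lowBits b) = b := by
  funext i
  rcases lt_trichotomy (i : ℕ) (2*m+1) with h | h | h
  · simp only [extBits, dif_pos h, lowBits]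
    congr 1
  · simp only [extBits]
    rw [dif_neg (by omega)]
    rw [if_pos h]
    congr 1
    exact Fin.ext h.symm
  · have hi : (i : ℕ) = 2*m+2 := by have := i.isLt; omega
    simp only [extBits]
    rw [dif_neg (by omega), if_neg (by omega)]
    congr 1
    exact Fin.ext hi.symm

lemma extBits_inj {m : ℕ} {t2 t1 s2 s1 : Bool} {v w : Fin (2*m+1) → Bool}
    (h : extBits m t2 t1 v = extBits m s2 s1 w) : t2 = s2 ∧ t1 = s1 ∧ v = w := by
  refine ⟨?_, ?_, ?_⟩
  · have := congrFun h ⟨2*m+2, by omega⟩; simpa using this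
  · have := congrFun h ⟨2*m+1, by omega⟩; simpa using this
  · have := congrArg lowBits h; simpa using this

lemma parityFn_extBits (m : ℕ) (t2 t1 : Bool) (v : Fin (2*m+1) → Bool) :
    parityFn (extBits m t2 t1 v) (2*m) = parityFn v (2*m) := by
  unfold parityFn
  have h : (List.range (2*m+1)).filter
        (fun j => if h : j < 2*(m+1)+1 then extBits m t2 t1 v ⟨j, h⟩ else false)
      = (List.range (2*m+1)).filter (fun j => if h : j < 2*m+1 then v ⟨j, h⟩ else false) := by
    apply List.filter_congr
    intro j hj
    rw [List.mem_range] at hj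
    have hj' : j < 2*m+1 := by omega
    have hj'' : j < 2*(m+1)+1 := by omega
    rw [dif_pos hj'', dif_pos hj']
    simp only [extBits]
    rw [dif_pos hj']
  rw [h]

/-! ### Adjacency lemmas -/

lemma adj_low {m : ℕ} (t2 t1 : Bool) {a b : Fin (2*m+1) → Bool} (h : (TwistedCube m).Adj a b) :
    (TwistedCube (m+1)).Adj (extBits m t2 t1 a) (extBits m t2 t1 b) := by
  refine ⟨fun he => h.ne (extBits_inj he).2.2, Or.inl ⟨?_, ?_, ?_⟩⟩ <;> simp [h]

lemma adj_cross1 {m : ℕ} (t2 t1 : Bool) (v : Fin (2*m+1) → Bool) :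
    (TwistedCube (m+1)).Adj (extBits m t2 t1 v) (extBits m (!t2) t1 v) := by
  refine ⟨fun he => by simpa using (extBits_inj he).1,
    Or.inr (Or.inl ⟨by simp, Or.inl ⟨by simp, by simp⟩⟩)⟩

lemma adj_cross2 {m : ℕ} (t2 t1 : Bool) {v : Fin (2*m+1) → Bool}
    (hp : parityFn v (2*m) = false) :
    (TwistedCube (m+1)).Adj (extBits m t2 t1 v) (extBits m (!t2) (!t1) v) := by
  refine ⟨fun he => by simpa using (extBits_inj he).1,
    Or.inr (Or.inl ⟨by simp, Or.inr (Or.inl ⟨?_, by simp, by simp⟩)⟩)⟩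
  rw [parityFn_extBits]; exact hp

lemma adj_cross3 {m : ℕ} (t2 t1 : Bool) {v : Fin (2*m+1) → Bool}
    (hp : parityFn v (2*m) = true) :
    (TwistedCube (m+1)).Adj (extBits m t2 t1 v) (extBits m t2 (!t1) v) := by
  refine ⟨fun he => by simpa using (extBits_inj he).2.1,
    Or.inr (Or.inl ⟨by simp, Or.inr (Or.inr ⟨?_, by simp, by simp⟩)⟩)⟩
  rw [parityFn_extBits]; exact hp

open SimpleGraph

def homExt (m : ℕ) (t2 t1 : Bool) : TwistedCube m →g TwistedCube (m+1) where
  toFun := extBits m t2 t1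
  map_rel' := fun h => adj_low t2 t1 h

@[simp] lemma homExt_coe (m : ℕ) (t2 t1 : Bool) : ⇑(homExt m t2 t1) = extBits m t2 t1 := rfl

lemma nodup_map_ext {m : ℕ} (a b : Bool) {L : List (Fin (2*m+1) → Bool)} (hL : L.Nodup) :
    (L.map (extBits m a b)).Nodup :=
  hL.map (fun _ _ h => (extBits_inj h).2.2)

lemma disj_map_ext_s19 {m : ℕ} {a b a' b' : Bool} (L L' : List (Fin (2*m+1) → Bool))
    (h : a ≠ a' ∨ b ≠ b') :
    List.Disjoint (L.map (extBits m a b)) (L'.map (extBits m a' b')) := by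
  intro x hx hx'
  obtain ⟨y, -, rfl⟩ := List.mem_map.1 hx
  obtain ⟨z, -, hz⟩ := List.mem_map.1 hx'
  obtain ⟨h1, h2, -⟩ := extBits_inj hz
  rcases h with h | h
  · exact h (h1.symm ▸ rfl)
  · exact h (h2.symm ▸ rfl)

lemma twistedCube_hamPath : ∀ m : ℕ, ∃ u v : Fin (2*m+1) → Bool, u ≠ v ∧
    ∃ q : (TwistedCube m).Walk u v, q.IsHamiltonian
  | 0 => by
    have hne : (fun _ => false : Fin (2*0+1) → Bool) ≠ (fun _ => true) := by
      intro h; simpa using congrFun h 0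
    have hadj : (TwistedCube 0).Adj (fun _ => false) (fun _ => true) := by
      simpa [TwistedCube] using hne
    refine ⟨_, _, hne, Walk.cons hadj Walk.nil, ?_⟩
    apply Walk.IsPath.isHamiltonian_of_mem
    · apply Walk.IsPath.mk'
      simpa using hne
    · intro w
      simp only [Walk.support_cons, Walk.support_nil, List.mem_cons]
      cases hw : w 0
      · refine Or.inl (funext fun i => ?_)
        rw [Fin.fin_one_eq_zero i, hw]
      · refine Or.inr (Or.inl (funext fun i => ?_))
        rw [Fin.fin_one_eq_zero i, hw]
  | (m+1) => by
    obtain ⟨u, v, huv, q, hq⟩ := twistedCube_hamPath m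
    set c : Bool := parityFn u (2*m) with hc
    have e1 : (TwistedCube (m+1)).Adj (extBits m false false v) (extBits m true false v) := by
      simpa using adj_cross1 false false v
    have e2 : (TwistedCube (m+1)).Adj (extBits m true false u) (extBits m c true u) := by
      cases hcp : parityFn u (2*m)
      · simpa [hc, hcp] using adj_cross2 true false (v := u) hcp
      · simpa [hc, hcp] using adj_cross3 true false (v := u) hcp
    have e3 : (TwistedCube (m+1)).Adj (extBits m c true v) (extBits m (!c) true v) :=
      adj_cross1 c true v
    let P : (TwistedCube (m+1)).Walk (extBits m false false u) (extBits m (!c) true u) :=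
      (q.map (homExt m false false)).append (Walk.cons e1
        ((q.reverse.map (homExt m true false)).append (Walk.cons e2
          ((q.map (homExt m c true)).append (Walk.cons e3
            (q.reverse.map (homExt m (!c) true)))))))
    have hS : q.support.Nodup := hq.isPath.support_nodup
    have hSm : ∀ x, x ∈ q.support := hq.mem_support
    have hsup : P.support = (q.support.map (extBits m false false)) ++
        ((q.support.reverse.map (extBits m true false)) ++
          ((q.support.map (extBits m c true)) ++
            (q.support.reverse.map (extBits m (!c) true)))) := by
      simp only [P]
      erw [Walk.support_append, Walk.support_cons, Walk.support_append, Walk.support_cons,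
        Walk.support_append, Walk.support_cons, Walk.support_map, Walk.support_map,
        Walk.support_map, Walk.support_map]
      simp [Walk.support_cons, Walk.support_map, Walk.support_reverse,
        List.tail_cons]
    have hnodup : P.support.Nodup := by
      rw [hsup]
      refine List.Nodup.append (nodup_map_ext _ _ hS) ?_ ?_
      · refine List.Nodup.append (nodup_map_ext _ _ (List.nodup_reverse.2 hS)) ?_ ?_
        · exact List.Nodup.append (nodup_map_ext _ _ hS) (nodup_map_ext _ _ (List.nodup_reverse.2 hS))
            (disj_map_ext_s19 _ _ (Or.inl (Bool.not_ne_self c).symm))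
        · rw [List.disjoint_append_right]
          exact ⟨disj_map_ext_s19 _ _ (Or.inr (by simp)), disj_map_ext_s19 _ _ (Or.inr (by simp))⟩
      · rw [List.disjoint_append_right, List.disjoint_append_right]
        exact ⟨disj_map_ext_s19 _ _ (Or.inl (by simp)),
          disj_map_ext_s19 _ _ (Or.inr (by simp)), disj_map_ext_s19 _ _ (Or.inr (by simp))⟩
    have hmem : ∀ w, w ∈ P.support := by
      intro w
      rw [hsup]
      simp only [List.mem_append, List.mem_map, List.mem_reverse]
      have hw := extBits_surj m w
      cases ht1 : w ⟨2*m+1, by omega⟩ <;> cases ht2 : w ⟨2*m+2, by omega⟩ <;>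
        rw [ht1, ht2] at hw
      · exact Or.inl ⟨lowBits w, hSm _, hw⟩
      · exact Or.inr (Or.inl ⟨lowBits w, hSm _, hw⟩)
      · cases hcv : c
        · exact Or.inr (Or.inr (Or.inl ⟨lowBits w, hSm _, by simpa using hw⟩))
        · exact Or.inr (Or.inr (Or.inr ⟨lowBits w, hSm _, by simpa using hw⟩))
      · cases hcv : c
        · exact Or.inr (Or.inr (Or.inr ⟨lowBits w, hSm _, by simpa using hw⟩))
        · exact Or.inr (Or.inr (Or.inl ⟨lowBits w, hSm _, by simpa using hw⟩))
    refine ⟨_, _, fun he => by simpa using (extBits_inj he).2.1, P,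
      (Walk.IsPath.mk' hnodup).isHamiltonian_of_mem hmem⟩

lemma prism_ham {V W : Type*} [DecidableEq V] [DecidableEq W] [Fintype W]
    (G : SimpleGraph V) (H : SimpleGraph W) (f : V → Bool → W)
    (hinj : ∀ ⦃x b y b'⦄, f x b = f y b' → x = y ∧ b = b')
    (hsurj : ∀ w, ∃ x b, f x b = w)
    (hcross : ∀ x, H.Adj (f x false) (f x true))
    (hedge : ∀ (b : Bool) ⦃x y : V⦄, G.Adj x y → H.Adj (f x b) (f y b))
    {u v : V} (huv : u ≠ v) (q : G.Walk u v) (hq : q.IsHamiltonian) :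
    H.IsHamiltonian := by
  intro _
  let hom : Bool → (G →g H) := fun b => ⟨fun x => f x b, fun h => hedge _ h⟩
  let P : H.Walk (f u true) (f u false) :=
    (q.map (hom true)).append (Walk.cons (H.adj_symm (hcross v)) (q.reverse.map (hom false)))
  have hS := hq.isPath.support_nodup
  have hSm := hq.mem_support
  have homc : ∀ b, ⇑(hom b) = fun x => f x b := fun _ => rfl
  have hsup : P.support = q.support.map (fun x => f x true) ++
      q.support.reverse.map (fun x => f x false) := by
    simp [P, Walk.support_append, Walk.support_cons, Walk.support_map, Walk.support_reverse,
      homc, List.tail_cons]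
  have hnodup : P.support.Nodup := by
    rw [hsup]
    refine List.Nodup.append (hS.map fun x y h => (hinj h).1)
      ((List.nodup_reverse.2 hS).map fun x y h => (hinj h).1) ?_
    intro x hx hx'
    obtain ⟨a, -, rfl⟩ := List.mem_map.1 hx
    obtain ⟨b, -, hb⟩ := List.mem_map.1 hx'
    simpa using (hinj hb).2
  have hpath : P.IsPath := Walk.IsPath.mk' hnodup
  have hmem : ∀ w, w ∈ P.support := by
    intro w
    obtain ⟨x, b, rfl⟩ := hsurj w
    rw [hsup]
    cases b
    · exact List.mem_append.2 (Or.inr (List.mem_map.2 ⟨x, List.mem_reverse.2 (hSm x), rfl⟩))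
    · exact List.mem_append.2 (Or.inl (List.mem_map.2 ⟨x, hSm x, rfl⟩))
  have hedgeP : s(f u false, f u true) ∉ P.edges := by
    intro hmem'
    simp only [P, Walk.edges_append, Walk.edges_cons, Walk.edges_map, List.mem_append,
      List.mem_cons, List.mem_map] at hmem'
    rcases hmem' with ⟨e, -, heq⟩ | (heq | ⟨e, -, heq⟩)
    · induction e using Sym2.ind with
      | _ a b =>
        rw [Sym2.map_pair_eq, homc, Sym2.eq_iff] at heq
        rcases heq with ⟨h1, -⟩ | ⟨-, h2⟩
        · exact absurd (hinj h1).2 (by simp)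
        · exact absurd (hinj h2).2 (by simp)
    · rw [Sym2.eq_iff] at heq
      rcases heq with ⟨h1, -⟩ | ⟨h1, -⟩
      · exact absurd (hinj h1).2 (by simp)
      · exact huv (hinj h1).1
    · induction e using Sym2.ind with
      | _ a b =>
        rw [Sym2.map_pair_eq, homc, Sym2.eq_iff] at heq
        rcases heq with ⟨-, h2⟩ | ⟨h1, -⟩
        · exact absurd (hinj h2).2 (by simp)
        · exact absurd (hinj h1).2 (by simp)
  refine ⟨f u false, Walk.cons (hcross u) P, ?_⟩
  rw [Walk.isHamiltonianCycle_iff_isCycle_and_support_count_tail_eq_one]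
  constructor
  · rw [Walk.cons_isCycle_iff]
    exact ⟨hpath, hedgeP⟩
  · intro a
    rw [Walk.support_cons, List.tail_cons]
    exact hpath.isHamiltonian_of_mem hmem a

lemma half_ham (m : ℕ) (t1 : Bool) (s : Set (Fin (2*(m+1)+1) → Bool)) [Fintype s]
    (hs : ∀ b, b ∈ s ↔ b ⟨2*m+1, by omega⟩ = t1) :
    ((TwistedCube (m+1)).induce s).IsHamiltonian := by
  obtain ⟨u, v, huv, q, hq⟩ := twistedCube_hamPath m
  have hmem : ∀ (t2 : Bool) (x : Fin (2*m+1) → Bool), extBits m t2 t1 x ∈ s :=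
    fun t2 x => (hs _).2 (extBits_mid m t2 t1 x)
  refine prism_ham (TwistedCube m) _ (fun x t2 => ⟨extBits m t2 t1 x, hmem t2 x⟩)
      ?_ ?_ ?_ ?_ huv q hq
  · intro x b y b' h
    rw [Subtype.mk.injEq] at h
    obtain ⟨h1, -, h3⟩ := extBits_inj h
    exact ⟨h3, h1⟩
  · rintro ⟨w, hw⟩
    refine ⟨lowBits w, w ⟨2*m+2, by omega⟩, Subtype.ext ?_⟩
    have ht : w ⟨2*m+1, by omega⟩ = t1 := (hs w).1 hw
    show extBits m (w ⟨2*m+2, by omega⟩) t1 (lowBits w) = w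
    rw [← ht]
    exact extBits_surj m w
  · intro x
    show (TwistedCube (m+1)).Adj _ _
    simpa using adj_cross1 false t1 x
  · intro b x y h
    show (TwistedCube (m+1)).Adj _ _
    exact adj_low b t1 h

/-- For every odd `n = 2k+1 ≥ 3`, `TQ_n` can be vertex-partitioned into
two induced subgraphs of `2^(n-1)` vertices each, both of which are Hamiltonian. -/
theorem twistedCube_partition_into_two_hamiltonian_halves (k : ℕ) (hk : 1 ≤ k) :
    ∃ S : Finset (Fin (2*k+1) → Bool),
      S.card = 2^(2*k) ∧ Sᶜ.card = 2^(2*k) ∧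
      ((TwistedCube k).induce (S : Set (Fin (2*k+1) → Bool))).IsHamiltonian ∧
      ((TwistedCube k).induce ((Sᶜ : Finset _) : Set (Fin (2*k+1) → Bool))).IsHamiltonian := by
  obtain ⟨m, rfl⟩ : ∃ m, k = m + 1 := ⟨k - 1, by omega⟩
  have hcard : ∀ t : Bool,
      (Finset.univ.filter (fun b : Fin (2*(m+1)+1) → Bool => b ⟨2*m+1, by omega⟩ = t)).card
        = 2^(2*(m+1)) := by
    intro t
    rw [← Fintype.card_subtype]
    have hbij : Function.Bijective
        (fun p : (Fin (2*m+1) → Bool) × Bool =>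
          (⟨extBits m p.2 t p.1, extBits_mid m p.2 t p.1⟩ :
            {b : Fin (2*(m+1)+1) → Bool // b ⟨2*m+1, by omega⟩ = t})) := by
      constructor
      · rintro ⟨x, b⟩ ⟨y, b'⟩ h
        rw [Subtype.mk.injEq] at h
        obtain ⟨h1, -, h3⟩ := extBits_inj h
        simp only [Prod.mk.injEq]
        exact ⟨h3, h1⟩
      · rintro ⟨w, hw⟩
        refine ⟨(lowBits w, w ⟨2*m+2, by omega⟩), Subtype.ext ?_⟩
        show extBits m (w ⟨2*m+2, by omega⟩) t (lowBits w) = w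
        rw [← hw]
        exact extBits_surj m w
    rw [← Fintype.card_of_bijective hbij]
    rw [Fintype.card_prod, Fintype.card_fun, Fintype.card_bool, Fintype.card_fin]
    ring
  refine ⟨Finset.univ.filter (fun b => b ⟨2*m+1, by omega⟩ = false), ?_, ?_, ?_, ?_⟩
  · exact hcard false
  · rw [show (Finset.univ.filter
        (fun b : Fin (2*(m+1)+1) → Bool => b ⟨2*m+1, by omega⟩ = false))ᶜ
      = Finset.univ.filter (fun b => b ⟨2*m+1, by omega⟩ = true) by
        ext b; simp]
    exact hcard true
  · exact half_ham m false _ (fun b => by simp)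
  · exact half_ham m true _ (fun b => by simp)
end
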